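/- Let (ν_j)_{j≥1} be i.i.d. real random variables with ℙ(ν_1 = 0) = 0 and 𝔼( |log(|ν_1|/2)| ) < ∞. Define the sequence (c_m)_{m≥1} by c_{2j−1} = ν_j and c_{2j} = −2 for j ≥ 1, and for m ≥ 2 the transfer matrices T_m = [[0, −c_{m−1}/c_m],[1, 0]] (these are the transfer matrices at energy E = 0 of the Jacobi matrix with zero diagonal and off-diagonal entries c_1, c_2, c_3, …, the one-particle operator of the Ising chain in random transversal field). Then almost surely lim_{N→∞} (1/N) log ‖ T_{N+1} T_N ⋯ T_2 ‖ = (1/2) | 𝔼( log(|ν_1|/2) ) |, i.e. the Lyapunov exponent at energy zero equals (1/2)|𝔼(log(|ν_1|/2))|. -/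

import Mathlib

open MeasureTheory ProbabilityTheory

noncomputable section

/-- operator norm of a matrix, viewed as an operator on Euclidean space -/
def opNorm {𝕜 : Type*} [RCLike 𝕜] {m : Type*} [Fintype m] [DecidableEq m]
    (M : Matrix m m 𝕜) : ℝ :=
  ‖(Matrix.toEuclideanLin M).toContinuousLinearMap‖

/-- The off-diagonal entries `c_1, c_2, c_3, … = ν_1, −2, ν_2, −2, …` of the one-particle
operator of the Ising chain; here `ν : ℕ → ℝ` is 0-based (`ν 0` is the paper's `ν_1`),
while `c` is 1-based as in the paper. -/
def isingOffdiag (ν : ℕ → ℝ) (m : ℕ) : ℝ :=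
  if m % 2 = 1 then ν ((m - 1) / 2) else -2

/-- the transfer matrices at energy `E = 0`: `T_m = [[0, −c_{m−1}/c_m],[1,0]]` for `m ≥ 2` -/
def isingTransfer (ν : ℕ → ℝ) (m : ℕ) : Matrix (Fin 2) (Fin 2) ℝ :=
  !![0, -(isingOffdiag ν (m - 1)) / isingOffdiag ν m; 1, 0]

end

section AuxNorm

lemma ising_norm_apply (M : Matrix (Fin 2) (Fin 2) ℝ) (v : EuclideanSpace ℝ (Fin 2)) :
    ‖(Matrix.toEuclideanLin M).toContinuousLinearMap v‖ ^ 2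
      = (M 0 0 * v 0 + M 0 1 * v 1)^2 + (M 1 0 * v 0 + M 1 1 * v 1)^2 := by
  have : (Matrix.toEuclideanLin M).toContinuousLinearMap v
      = (WithLp.equiv 2 (Fin 2 → ℝ)).symm (M.mulVec ((WithLp.equiv 2 (Fin 2 → ℝ)) v)) := rfl
  rw [this]
  rw [EuclideanSpace.norm_eq]
  rw [Real.sq_sqrt (by positivity)]
  simp [Matrix.mulVec, Fin.sum_univ_two, dotProduct, sq_abs]

lemma ising_opNorm_special (M : Matrix (Fin 2) (Fin 2) ℝ) (a b : ℝ)
    (h : ∀ v : EuclideanSpace ℝ (Fin 2),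
      ‖(Matrix.toEuclideanLin M).toContinuousLinearMap v‖ ^ 2 = a^2*(v 0)^2 + b^2*(v 1)^2) :
    opNorm M = max |a| |b| := by
  set T := (Matrix.toEuclideanLin M).toContinuousLinearMap with hT
  have hnorm : ∀ v : EuclideanSpace ℝ (Fin 2), ‖v‖^2 = (v 0)^2 + (v 1)^2 := by
    intro v
    rw [EuclideanSpace.norm_eq, Real.sq_sqrt (by positivity)]
    simp [Fin.sum_univ_two, sq_abs]
  apply le_antisymm
  · apply ContinuousLinearMap.opNorm_le_bound _ (le_max_of_le_left (abs_nonneg a))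
    intro v
    have h1 : ‖T v‖^2 ≤ (max |a| |b|)^2 * ‖v‖^2 := by
      rw [h v, hnorm v]
      have ha : a^2 ≤ (max |a| |b|)^2 := by
        rw [← sq_abs a]; exact pow_le_pow_left₀ (abs_nonneg a) (le_max_left _ _) 2
      have hb : b^2 ≤ (max |a| |b|)^2 := by
        rw [← sq_abs b]; exact pow_le_pow_left₀ (abs_nonneg b) (le_max_right _ _) 2
      nlinarith [sq_nonneg (v 0), sq_nonneg (v 1)]
    calc ‖T v‖ = Real.sqrt (‖T v‖^2) := (Real.sqrt_sq (norm_nonneg _)).symm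
    _ ≤ Real.sqrt ((max |a| |b|)^2 * ‖v‖^2) := Real.sqrt_le_sqrt h1
    _ = max |a| |b| * ‖v‖ := by
        rw [Real.sqrt_mul (sq_nonneg _), Real.sqrt_sq_eq_abs, Real.sqrt_sq_eq_abs,
          abs_of_nonneg (le_max_of_le_left (abs_nonneg a)), abs_norm]
  · have h0 : |a| ≤ ‖T‖ := by
      have := T.le_opNorm (EuclideanSpace.single (0 : Fin 2) (1:ℝ))
      rw [EuclideanSpace.norm_single] at this
      have hv : ‖T (EuclideanSpace.single (0 : Fin 2) (1:ℝ))‖ = |a| := by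
        rw [← Real.sqrt_sq (norm_nonneg _), h]
        simp [EuclideanSpace.single_apply, Real.sqrt_sq_eq_abs]
      rw [hv] at this; simpa using this
    have h1 : |b| ≤ ‖T‖ := by
      have := T.le_opNorm (EuclideanSpace.single (1 : Fin 2) (1:ℝ))
      rw [EuclideanSpace.norm_single] at this
      have hv : ‖T (EuclideanSpace.single (1 : Fin 2) (1:ℝ))‖ = |b| := by
        rw [← Real.sqrt_sq (norm_nonneg _), h]
        simp [EuclideanSpace.single_apply, Real.sqrt_sq_eq_abs]
      rw [hv] at this; simpa using this
    exact max_le h0 h1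

lemma ising_opNorm_diag (d e : ℝ) : opNorm !![d,0;0,e] = max |d| |e| := by
  apply ising_opNorm_special
  intro v
  rw [ising_norm_apply]
  simp [Matrix.cons_val_zero, Matrix.cons_val_one]
  ring

lemma ising_opNorm_anti (x y : ℝ) : opNorm !![0,x;y,0] = max |x| |y| := by
  rw [max_comm]
  apply ising_opNorm_special
  intro v
  rw [ising_norm_apply]
  simp [Matrix.cons_val_zero, Matrix.cons_val_one]
  ring

end AuxNorm

section AuxProd

lemma ising_range_succ_prod (f : ℕ → Matrix (Fin 2) (Fin 2) ℝ) (N : ℕ) :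
    ((List.range (N+1)).map (fun i => f (N+2-i))).prod
      = f (N+2) * ((List.range N).map (fun i => f (N+1-i))).prod := by
  rw [List.range_succ_eq_map, List.map_cons, List.map_map, List.prod_cons]
  have h1 : (fun i => f (N+2-i)) ∘ Nat.succ = fun i => f (N+1-i) := by
    funext i
    simp only [Function.comp_apply]
    have h2 : N + 2 - Nat.succ i = N + 1 - i := by omega
    rw [h2]
  rw [h1]
  norm_num

lemma ising_transfer_even (ν : ℕ → ℝ) (k : ℕ) :
    isingTransfer ν (2*k+2) = !![0, ν k / 2; 1, 0] := by
  have h1 : (2*k+2-1) % 2 = 1 := by omega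
  have h2 : (2*k+2) % 2 = 0 := by omega
  have h3 : (2*k+2-1-1)/2 = k := by omega
  simp only [isingTransfer, isingOffdiag, h1, h2, h3]
  norm_num

lemma ising_transfer_odd (ν : ℕ → ℝ) (k : ℕ) :
    isingTransfer ν (2*k+3) = !![0, 2 / ν (k+1); 1, 0] := by
  have h1 : (2*k+3-1) % 2 = 0 := by omega
  have h2 : (2*k+3) % 2 = 1 := by omega
  have h3 : (2*k+3-1)/2 = k+1 := by omega
  simp only [isingTransfer, isingOffdiag, h1, h2, h3]
  norm_num

lemma ising_prod_formula (ν : ℕ → ℝ) (k : ℕ) :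
    ((List.range (2*k)).map (fun i => isingTransfer ν (2*k+1-i))).prod
        = !![∏ j ∈ Finset.range k, 2 / ν (j+1), 0; 0, ∏ j ∈ Finset.range k, ν j / 2]
      ∧ ((List.range (2*k+1)).map (fun i => isingTransfer ν (2*k+2-i))).prod
        = !![0, ∏ j ∈ Finset.range (k+1), ν j / 2; ∏ j ∈ Finset.range k, 2 / ν (j+1), 0] := by
  induction k with
  | zero =>
    constructor
    · simp [Matrix.one_fin_two]
    · have : (2*0+1 : ℕ) = 0 + 1 := rfl
      simp only [this, ising_range_succ_prod]
      have h2 : isingTransfer ν 2 = !![0, ν 0 / 2; 1, 0] := ising_transfer_even ν 0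
      simp [h2, Matrix.mul_fin_two]
  | succ k ih =>
    have heven : ((List.range (2*(k+1))).map (fun i => isingTransfer ν (2*(k+1)+1-i))).prod
        = !![∏ j ∈ Finset.range (k+1), 2 / ν (j+1), 0; 0, ∏ j ∈ Finset.range (k+1), ν j / 2] := by
      have e1 : 2*(k+1) = (2*k+1) + 1 := by ring
      have e2 : 2*(k+1)+1 = (2*k+1) + 2 := by ring
      simp only [e1, e2, ising_range_succ_prod]
      have e3 : (2*k+1)+2 = 2*k+3 := rfl
      rw [e3, ising_transfer_odd, ising_transfer_even, ih.1, Matrix.mul_fin_two,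
        Matrix.mul_fin_two]
      rw [Finset.prod_range_succ (fun j => 2 / ν (j+1)) k,
        Finset.prod_range_succ (fun j => ν j / 2) k]
      norm_num [mul_comm]
    refine ⟨heven, ?_⟩
    have e1 : 2*(k+1)+1 = (2*(k+1)) + 1 := rfl
    have e2 : 2*(k+1)+2 = (2*(k+1)) + 2 := rfl
    simp only [e1, e2, ising_range_succ_prod]
    rw [show (2*(k+1))+2 = 2*(k+1)+2 from rfl, ising_transfer_even, heven, Matrix.mul_fin_two]
    rw [Finset.prod_range_succ (fun j => ν j / 2) (k+1)]
    norm_num [mul_comm]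

end AuxProd

section AuxAnalysis

open Filter Topology

lemma ising_log_max {a b : ℝ} (ha : 0 < a) (hb : 0 < b) :
    Real.log (max a b) = max (Real.log a) (Real.log b) := by
  rcases le_total a b with h | h
  · rw [max_eq_right h, max_eq_right ((Real.log_le_log_iff ha hb).2 h)]
  · rw [max_eq_left h, max_eq_left ((Real.log_le_log_iff hb ha).2 h)]

lemma ising_tendsto_ratio {φ : ℕ → ℕ} {c : ℝ}
    (h1 : ∀ n, c * n - 1 ≤ (φ n : ℝ)) (h2 : ∀ n, (φ n : ℝ) ≤ c * n + 1) :
    Tendsto (fun n : ℕ => (φ n : ℝ) / n) atTop (𝓝 c) := by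
  have hinv : Tendsto (fun n : ℕ => (n : ℝ)⁻¹) atTop (𝓝 0) :=
    tendsto_inv_atTop_nhds_zero_nat
  have hlo : Tendsto (fun n : ℕ => c - (n : ℝ)⁻¹) atTop (𝓝 c) := by
    simpa using tendsto_const_nhds.sub hinv
  have hhi : Tendsto (fun n : ℕ => c + (n : ℝ)⁻¹) atTop (𝓝 c) := by
    simpa using tendsto_const_nhds.add hinv
  apply tendsto_of_tendsto_of_tendsto_of_le_of_le' hlo hhi
  · filter_upwards [eventually_ge_atTop 1] with n hn
    have hn0 : (0:ℝ) < n := by exact_mod_cast hn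
    rw [le_div_iff₀ hn0]
    have := h1 n
    have h3 : (n:ℝ) * (n:ℝ)⁻¹ = 1 := mul_inv_cancel₀ (ne_of_gt hn0)
    nlinarith
  · filter_upwards [eventually_ge_atTop 1] with n hn
    have hn0 : (0:ℝ) < n := by exact_mod_cast hn
    rw [div_le_iff₀ hn0]
    have := h2 n
    have h3 : (n:ℝ) * (n:ℝ)⁻¹ = 1 := mul_inv_cancel₀ (ne_of_gt hn0)
    nlinarith

lemma ising_tendsto_inv_mul_comp {u : ℕ → ℝ} {μ0 c : ℝ}
    (h : Tendsto (fun n : ℕ => (n : ℝ)⁻¹ * u n) atTop (𝓝 μ0))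
    {φ : ℕ → ℕ} (hφ : Tendsto φ atTop atTop)
    (hc : Tendsto (fun n : ℕ => (φ n : ℝ) / n) atTop (𝓝 c)) :
    Tendsto (fun n : ℕ => (n : ℝ)⁻¹ * u (φ n)) atTop (𝓝 (c * μ0)) := by
  have h2 : Tendsto (fun n : ℕ => ((φ n : ℝ) / n) * ((φ n : ℝ)⁻¹ * u (φ n))) atTop
      (𝓝 (c * μ0)) := hc.mul (h.comp hφ)
  apply h2.congr'
  filter_upwards [eventually_ge_atTop 1, hφ.eventually (eventually_ge_atTop 1)] with n hn hφn
  have hn0 : (n:ℝ) ≠ 0 := by positivity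
  have hφ0 : (φ n : ℝ) ≠ 0 := by
    have : 0 < φ n := hφn
    positivity
  field_simp

lemma ising_log_term {x : ℝ} (hx : x ≠ 0) : Real.log |2 / x| = -(Real.log (|x| / 2)) := by
  rw [abs_div, abs_two, Real.log_div two_ne_zero (abs_ne_zero.2 hx),
    Real.log_div (abs_ne_zero.2 hx) two_ne_zero]
  ring

lemma ising_log_term2 (x : ℝ) : Real.log |x / 2| = Real.log (|x| / 2) := by
  rw [abs_div, abs_two]

end AuxAnalysis

/-- For the Ising chain in an i.i.d. random transversal field with
`ℙ(ν_1 = 0) = 0` and `𝔼|log(|ν_1|/2)| < ∞`, the Lyapunov exponent at energy zero is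
`γ(0) = (1/2)|𝔼(log(|ν_1|/2))|`. -/
theorem ising_lyapunov_exponent_at_zero
    {Ω : Type*} [MeasurableSpace Ω] (P : MeasureTheory.Measure Ω)
    [MeasureTheory.IsProbabilityMeasure P]
    (ν : ℕ → Ω → ℝ) (hνmeas : ∀ j, Measurable (ν j))
    (hνindep : ProbabilityTheory.iIndepFun ν P)
    (hνident : ∀ i j, ProbabilityTheory.IdentDistrib (ν i) (ν j) P P)
    (hνne : P {ω | ν 0 ω = 0} = 0)
    (hint : MeasureTheory.Integrable (fun ω => Real.log (|ν 0 ω| / 2)) P) :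
    ∀ᵐ ω ∂P, Filter.Tendsto
      (fun N : ℕ => ((N : ℝ))⁻¹ * Real.log (opNorm
        (((List.range N).map (fun i => isingTransfer (fun j => ν j ω) (N + 1 - i))).prod)))
      Filter.atTop
      (nhds ((1 / 2) * |∫ ω', Real.log (|ν 0 ω'| / 2) ∂P|)) := by
  classical
  have hφm : Measurable (fun x : ℝ => Real.log (|x| / 2)) :=
    Real.measurable_log.comp (measurable_abs.div_const 2)
  set X : ℕ → Ω → ℝ := fun j ω => Real.log (|ν j ω| / 2) with hXdef
  -- strong law for X
  have hpair : Pairwise (Function.onFun (ProbabilityTheory.IndepFun · · P) X) := by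
    intro i j hij
    exact (hνindep.indepFun hij).comp hφm hφm
  have hidentX : ∀ i, ProbabilityTheory.IdentDistrib (X i) (X 0) P P :=
    fun i => (hνident i 0).comp hφm
  have hslln1 := ProbabilityTheory.strong_law_ae X hint hpair hidentX
  -- strong law for the shifted sequence
  set Y : ℕ → Ω → ℝ := fun j ω => Real.log (|ν (j+1) ω| / 2) with hYdef
  have hpairY : Pairwise (Function.onFun (ProbabilityTheory.IndepFun · · P) Y) := by
    intro i j hij
    exact (hνindep.indepFun (by omega : i+1 ≠ j+1)).comp hφm hφm
  have hidentY : ∀ i, ProbabilityTheory.IdentDistrib (Y i) (Y 0) P P :=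
    fun i => (hνident (i+1) 1).comp hφm
  have hintY : MeasureTheory.Integrable (Y 0) P :=
    ((hνident 1 0).comp hφm).integrable_iff.mpr hint
  have hslln2 := ProbabilityTheory.strong_law_ae Y hintY hpairY hidentY
  have hIntEq : (∫ ω', Y 0 ω' ∂P) = ∫ ω', X 0 ω' ∂P :=
    ((hνident 1 0).comp hφm).integral_eq
  -- almost sure nonvanishing
  have hzero : ∀ j, P {ω | ν j ω = 0} = 0 := by
    intro j
    have h1 : MeasureTheory.Measure.map (ν j) P = MeasureTheory.Measure.map (ν 0) P :=
      (hνident j 0).map_eq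
    have h2 : P {ω | ν j ω = 0} = MeasureTheory.Measure.map (ν j) P {0} := by
      rw [MeasureTheory.Measure.map_apply (hνmeas j) (measurableSet_singleton 0)]
      rfl
    have h3 : P {ω | ν 0 ω = 0} = MeasureTheory.Measure.map (ν 0) P {0} := by
      rw [MeasureTheory.Measure.map_apply (hνmeas 0) (measurableSet_singleton 0)]
      rfl
    rw [h2, h1, ← h3, hνne]
  have hne : ∀ᵐ ω ∂P, ∀ j, ν j ω ≠ 0 := by
    rw [MeasureTheory.ae_all_iff]
    intro j
    rw [MeasureTheory.ae_iff]
    simpa using hzero j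
  filter_upwards [hslln1, hslln2, hne] with ω h1 h2 hω0
  simp only [smul_eq_mul] at h1 h2
  set μ0 : ℝ := ∫ ω', Real.log (|ν 0 ω'| / 2) ∂P with hμ0
  -- the partial sums
  set S : ℕ → ℝ := fun n => ∑ i ∈ Finset.range n, Real.log (|ν i ω| / 2) with hSdef
  set S' : ℕ → ℝ := fun n => ∑ i ∈ Finset.range n, Real.log (|ν (i+1) ω| / 2) with hS'def
  have h1' : Filter.Tendsto (fun n : ℕ => (n : ℝ)⁻¹ * S n) Filter.atTop (nhds μ0) := h1
  have h2' : Filter.Tendsto (fun n : ℕ => (n : ℝ)⁻¹ * S' n) Filter.atTop (nhds μ0) := by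
    rw [show μ0 = ∫ ω', Y 0 ω' ∂P from (hIntEq.trans rfl).symm]
    exact h2
  -- ratio limits
  have hφ1 : Filter.Tendsto (fun n : ℕ => (n+1)/2) Filter.atTop Filter.atTop :=
    Filter.tendsto_atTop_atTop.mpr (fun b => ⟨2*b, fun n hn => by omega⟩)
  have hφ2 : Filter.Tendsto (fun n : ℕ => n/2) Filter.atTop Filter.atTop :=
    Filter.tendsto_atTop_atTop.mpr (fun b => ⟨2*b, fun n hn => by omega⟩)
  have hc1 : Filter.Tendsto (fun n : ℕ => (((n+1)/2 : ℕ) : ℝ) / n) Filter.atTop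
      (nhds (1/2 : ℝ)) := by
    apply ising_tendsto_ratio
    · intro n
      have h : n ≤ 2*((n+1)/2) + 1 := by omega
      have := (Nat.cast_le (α := ℝ)).2 h
      push_cast at this
      linarith
    · intro n
      have h : 2*((n+1)/2) ≤ n + 1 := by omega
      have := (Nat.cast_le (α := ℝ)).2 h
      push_cast at this
      linarith
  have hc2 : Filter.Tendsto (fun n : ℕ => ((n/2 : ℕ) : ℝ) / n) Filter.atTop
      (nhds (1/2 : ℝ)) := by
    apply ising_tendsto_ratio
    · intro n
      have h : n ≤ 2*(n/2) + 1 := by omega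
      have := (Nat.cast_le (α := ℝ)).2 h
      push_cast at this
      linarith
    · intro n
      have h : 2*(n/2) ≤ n := by omega
      have := (Nat.cast_le (α := ℝ)).2 h
      push_cast at this
      linarith
  have hA : Filter.Tendsto (fun n : ℕ => (n : ℝ)⁻¹ * S ((n+1)/2)) Filter.atTop
      (nhds ((1/2) * μ0)) := ising_tendsto_inv_mul_comp h1' hφ1 hc1
  have hB : Filter.Tendsto (fun n : ℕ => (n : ℝ)⁻¹ * S' (n/2)) Filter.atTop
      (nhds ((1/2) * μ0)) := ising_tendsto_inv_mul_comp h2' hφ2 hc2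
  have hmax : Filter.Tendsto
      (fun n : ℕ => max ((n : ℝ)⁻¹ * S ((n+1)/2)) (-((n : ℝ)⁻¹ * S' (n/2)))) Filter.atTop
      (nhds (max ((1/2) * μ0) (-((1/2) * μ0)))) := hA.max hB.neg
  have hmaxval : max ((1/2) * μ0) (-((1/2) * μ0)) = (1/2) * |μ0| := by
    rcases le_total μ0 0 with h | h
    · rw [abs_of_nonpos h, max_eq_right (by linarith)]; ring
    · rw [abs_of_nonneg h, max_eq_left (by linarith)]
  rw [hmaxval] at hmax
  apply hmax.congr
  intro n
  -- pointwise identity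
  have hkey : Real.log (opNorm
      (((List.range n).map (fun i => isingTransfer (fun j => ν j ω) (n + 1 - i))).prod))
      = max (S ((n+1)/2)) (-(S' (n/2))) := by
    have hlogd : ∀ k : ℕ, Real.log (∏ j ∈ Finset.range k, |2 / ν (j+1) ω|) = -(S' k) := by
      intro k
      rw [Real.log_prod (fun j _ =>
        (abs_ne_zero.2 (div_ne_zero two_ne_zero (hω0 (j+1)))))]
      rw [hS'def, ← Finset.sum_neg_distrib]
      exact Finset.sum_congr rfl (fun j _ => ising_log_term (hω0 (j+1)))
    have hloge : ∀ k : ℕ, Real.log (∏ j ∈ Finset.range k, |ν j ω / 2|) = S k := by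
      intro k
      rw [Real.log_prod (fun j _ =>
        (abs_ne_zero.2 (div_ne_zero (hω0 j) two_ne_zero)))]
      exact Finset.sum_congr rfl (fun j _ => ising_log_term2 (ν j ω))
    have hdpos : ∀ k : ℕ, 0 < ∏ j ∈ Finset.range k, |2 / ν (j+1) ω| :=
      fun k => Finset.prod_pos (fun j _ =>
        abs_pos.2 (div_ne_zero two_ne_zero (hω0 (j+1))))
    have hepos : ∀ k : ℕ, 0 < ∏ j ∈ Finset.range k, |ν j ω / 2| :=
      fun k => Finset.prod_pos (fun j _ => abs_pos.2 (div_ne_zero (hω0 j) two_ne_zero))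
    rcases Nat.even_or_odd n with he | ho
    · obtain ⟨k, hk⟩ := he
      have hn : n = 2*k := by omega
      subst hn
      rw [(ising_prod_formula (fun j => ν j ω) k).1, ising_opNorm_diag,
        Finset.abs_prod, Finset.abs_prod, ising_log_max (hdpos k) (hepos k),
        hlogd k, hloge k, max_comm]
      have e1 : (2*k+1)/2 = k := by omega
      have e2 : (2*k)/2 = k := by omega
      rw [e1, e2]
    · obtain ⟨k, hk⟩ := ho
      subst hk
      have estep : (2*k+1) + 1 = 2*k+2 := rfl
      simp only [estep]
      rw [(ising_prod_formula (fun j => ν j ω) k).2, ising_opNorm_anti,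
        Finset.abs_prod, Finset.abs_prod, ising_log_max (hepos (k+1)) (hdpos k),
        hlogd k, hloge (k+1)]
      have e1 : (2*k+1+1)/2 = k+1 := by omega
      have e2 : (2*k+1)/2 = k := by omega
      rw [e1, e2]
  rw [hkey, mul_max_of_nonneg _ _ (by positivity : (0:ℝ) ≤ (n:ℝ)⁻¹), mul_neg]
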